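/- arXiv:math/0510392 — 2 statements merged into one kernel-verified Lean document; each statement's English description precedes it below -/
import Mathlib

section
/- Let $Y$ be a random variable with values in the positive integers, let $p \geq 1$ be real, and suppose $E(Y^{p+1}) < \infty$. Let $S_0 = 0$, $S_n = Y_1 + \cdots + Y_n$ be the renewal process of i.i.d. copies of $Y$, and for $x \geq 1$ let $B_x = \min\{m \geq 0 : x + m \in \{S_n : n \geq 0\}\}$ be the forward recurrence time at $x$. Then there is a constant $C$ (independent of $x$ and depending only on $p$) such that $E(B_x^p) \leq C\, E(Y^{p+1})$ for all $x \geq 1$. -/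
open MeasureTheory ProbabilityTheory
open scoped ENNReal

/-- uniform moment bound for the forward recurrence time (overshoot)
of a renewal process of i.i.d. positive-integer-valued random variables:
`E(B_x^p) ≤ C E(Y^{p+1})` uniformly in `x ≥ 1`. -/
theorem stmt_0
    {Ω : Type*} [MeasurableSpace Ω] (μ : Measure Ω) [IsProbabilityMeasure μ]
    (Y : ℕ → Ω → ℕ) (hmeas : ∀ i, Measurable (Y i))
    (hindep : iIndepFun Y μ)
    (hident : ∀ i, IdentDistrib (Y i) (Y 0) μ μ)
    (hpos : ∀ i, ∀ᵐ ω ∂μ, 1 ≤ Y i ω)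
    (p : ℝ) (hp : 1 ≤ p)
    (hmom : ∫⁻ ω, ENNReal.ofReal ((Y 0 ω : ℝ) ^ (p + 1)) ∂μ ≠ ⊤)
    (S : ℕ → Ω → ℕ) (hS : ∀ n ω, S n ω = ∑ i ∈ Finset.range n, Y i ω)
    (B : ℕ → Ω → ℕ)
    (hB : ∀ x ω, B x ω = sInf {m : ℕ | ∃ n, S n ω = x + m}) :
    ∃ C : ℝ≥0∞, C ≠ ⊤ ∧ ∀ x : ℕ, 1 ≤ x →
      ∫⁻ ω, ENNReal.ofReal ((B x ω : ℝ) ^ p) ∂μ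
        ≤ C * ∫⁻ ω, ENNReal.ofReal ((Y 0 ω : ℝ) ^ (p + 1)) ∂μ := by
  classical
  have hp0 : (0:ℝ) < p := lt_of_lt_of_le one_pos hp
  -- increments of the rpow b^p
  set c : ℕ → ℝ≥0∞ := fun m => ENNReal.ofReal (((m:ℝ)+1) ^ p - (m:ℝ) ^ p) with hc
  have hcsum : ∀ b : ℕ, ∑ m ∈ Finset.range b, c m = ENNReal.ofReal ((b:ℝ) ^ p) := by
    intro b
    induction b with
    | zero => simp [Real.zero_rpow (ne_of_gt hp0)]
    | succ b ih =>
      rw [Finset.sum_range_succ, ih, hc]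
      rw [← ENNReal.ofReal_add (Real.rpow_nonneg (by positivity) p)
        (sub_nonneg.2 (Real.rpow_le_rpow (by positivity) (by linarith) (le_of_lt hp0)))]
      congr 1
      push_cast
      ring
  -- measurability of S
  have hSm : ∀ n, Measurable (S n) := by
    intro n
    have : S n = fun ω => ∑ i ∈ Finset.range n, Y i ω := funext fun ω => hS n ω
    rw [this]
    exact Finset.measurable_sum _ fun i _ => hmeas i
  -- tail sets of Y 0
  set U : ℕ → Set Ω := fun k => Y 0 ⁻¹' Set.Ici k with hUdef
  have hU : ∀ k, MeasurableSet (U k) := fun k => (hmeas 0) measurableSet_Ici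
  set Q : ℕ → ℝ≥0∞ := fun k => μ (U k) with hQdef
  set T : ℕ → ℝ≥0∞ := fun m => ∑' k : ℕ, Q (m + 1 + k) with hTdef
  -- the good set
  set G : Set Ω := {ω | ∀ i, 1 ≤ Y i ω} with hGdef
  have hGm : MeasurableSet G := by
    have : G = ⋂ i, Y i ⁻¹' Set.Ici 1 := by
      ext ω; simp [hGdef, Set.mem_iInter]
    rw [this]
    exact MeasurableSet.iInter fun i => (hmeas i) measurableSet_Ici
  have hGnull : μ Gᶜ = 0 := by
    have h : ∀ᵐ ω ∂μ, ∀ i, 1 ≤ Y i ω := ae_all_iff.2 hpos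
    exact ae_iff.1 h
  -- S strictly increasing on G and S n ≥ n
  have hSsucc : ∀ n ω, S (n+1) ω = S n ω + Y n ω := by
    intro n ω; rw [hS, hS, Finset.sum_range_succ]
  have hSmono : ∀ ω ∈ G, StrictMono fun n => S n ω := by
    intro ω hω
    apply strictMono_nat_of_lt_succ
    intro n
    have := hω n
    rw [hSsucc]
    omega
  have hSge : ∀ ω ∈ G, ∀ n, n ≤ S n ω := by
    intro ω hω n
    induction n with
    | zero => omega
    | succ n ih => have := hω n; rw [hSsucc]; omega
  have hS0 : ∀ ω, S 0 ω = 0 := by intro ω; rw [hS]; simp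
  -- renewal function bound
  have hren : ∀ j : ℕ, ∑' n : ℕ, μ (S n ⁻¹' {j}) ≤ 1 := by
    intro j
    have h1 : ∀ n : ℕ, μ (S n ⁻¹' {j}) = μ (S n ⁻¹' {j} ∩ G) :=
      fun n => (measure_inter_conull hGnull).symm
    have hdisj : Pairwise (Function.onFun Disjoint fun n => S n ⁻¹' {j} ∩ G) := by
      intro n n' hnn'
      rw [Function.onFun, Set.disjoint_left]
      rintro ω ⟨h1', h2'⟩ ⟨h3', h4'⟩
      have := (hSmono ω h2').injective (a₁ := n) (a₂ := n')
      simp only [Set.mem_preimage, Set.mem_singleton_iff] at h1' h3'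
      exact hnn' (this (h1'.trans h3'.symm))
    calc ∑' n : ℕ, μ (S n ⁻¹' {j}) = ∑' n : ℕ, μ (S n ⁻¹' {j} ∩ G) := tsum_congr h1
      _ = μ (⋃ n, S n ⁻¹' {j} ∩ G) :=
          (measure_iUnion hdisj fun n => ((hSm n) (measurableSet_singleton j)).inter hGm).symm
      _ ≤ 1 := prob_le_one
  -- independence step
  have hind : ∀ n : ℕ, IndepFun (S n) (Y n) μ := by
    intro n
    have h0 := hindep.indepFun_sum_range_succ hmeas n
    have hfun : (∑ j ∈ Finset.range n, Y j) = S n := by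
      funext ω
      rw [hS]
      simp
    rwa [hfun] at h0
  refine ⟨1, ENNReal.one_ne_top, ?_⟩
  intro x hx
  rw [one_mul]
  -- measurability of the overshoot tail events
  have hEmeas : ∀ m : ℕ, MeasurableSet {ω | m < B x ω} := by
    intro m
    have hset : {ω | m < B x ω} =
        (⋃ (m' : ℕ) (n : ℕ), S n ⁻¹' {x + m'}) ∩
          ⋂ (k : ℕ) (_ : k ≤ m) (n : ℕ), (S n ⁻¹' {x + k})ᶜ := by
      ext ω
      simp only [Set.mem_setOf_eq, Set.mem_inter_iff, Set.mem_iUnion, Set.mem_iInter,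
        Set.mem_preimage, Set.mem_singleton_iff, Set.mem_compl_iff]
      rw [hB]
      constructor
      · intro h
        constructor
        · obtain ⟨m', hm'⟩ := Nat.nonempty_of_pos_sInf (lt_of_le_of_lt (Nat.zero_le m) h)
          obtain ⟨n, hn⟩ := hm'
          exact ⟨m', n, hn⟩
        · intro k hk n hkn
          have : sInf {m : ℕ | ∃ n, S n ω = x + m} ≤ k := Nat.sInf_le ⟨n, hkn⟩
          omega
      · rintro ⟨⟨m', n, hn⟩, h2⟩
        have hne : {m : ℕ | ∃ n, S n ω = x + m}.Nonempty := ⟨m', n, hn⟩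
        have hmem := Nat.sInf_mem hne
        obtain ⟨n', hn'⟩ := hmem
        by_contra hcon
        push_neg at hcon
        exact h2 _ hcon n' hn'
    rw [hset]
    exact ((MeasurableSet.iUnion fun m' => MeasurableSet.iUnion fun n =>
      (hSm n) (measurableSet_singleton _))).inter
      (MeasurableSet.iInter fun k => MeasurableSet.iInter fun _ =>
        MeasurableSet.iInter fun n => ((hSm n) (measurableSet_singleton _)).compl)
  -- key overshoot bound
  have key : ∀ m : ℕ, μ {ω | m < B x ω} ≤ ∑ j ∈ Finset.range x, Q (x + m + 1 - j) := by
    intro m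
    have hsub : {ω | m < B x ω} ∩ G ⊆
        ⋃ j ∈ Finset.range x, ⋃ n : ℕ, (S n ⁻¹' {j} ∩ Y n ⁻¹' Set.Ici (x + m + 1 - j)) := by
      rintro ω ⟨hωB, hωG⟩
      simp only [Set.mem_setOf_eq] at hωB
      have hex : ∃ n, x ≤ S n ω := ⟨x, hSge ω hωG x⟩
      have h0 : x ≤ S (Nat.find hex) ω := Nat.find_spec hex
      have hn₀pos : Nat.find hex ≠ 0 := by
        intro h
        rw [h, hS0] at h0
        omega
      obtain ⟨n, hn1⟩ : ∃ n, Nat.find hex = n + 1 := ⟨Nat.find hex - 1, by omega⟩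
      rw [hn1] at h0
      have hn : ¬ x ≤ S n ω := Nat.find_min hex (by omega)
      have hjlt : S n ω < x := by omega
      -- S (n+1) ω ≥ x + m + 1
      have hbig : x + m + 1 ≤ S (n+1) ω := by
        by_contra hcon
        push_neg at hcon
        have hk : S (n+1) ω = x + (S (n+1) ω - x) := by omega
        have hmem : (S (n+1) ω - x) ∈ {m : ℕ | ∃ n', S n' ω = x + m} := ⟨n+1, hk⟩
        have := Nat.sInf_le hmem
        rw [← hB] at this
        omega
      refine Set.mem_biUnion (Finset.mem_range.2 hjlt) ?_
      refine Set.mem_iUnion.2 ⟨n, ?_⟩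
      constructor
      · exact rfl
      · simp only [Set.mem_preimage, Set.mem_Ici]
        have := hSsucc n ω
        omega
    calc μ {ω | m < B x ω}
        ≤ μ (({ω | m < B x ω} ∩ G) ∪ Gᶜ) := by
          apply measure_mono
          intro ω hω
          by_cases hg : ω ∈ G
          · exact Or.inl ⟨hω, hg⟩
          · exact Or.inr hg
      _ ≤ μ ({ω | m < B x ω} ∩ G) + μ Gᶜ := measure_union_le _ _
      _ = μ ({ω | m < B x ω} ∩ G) := by rw [hGnull, add_zero]
      _ ≤ μ (⋃ j ∈ Finset.range x, ⋃ n : ℕ,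
            (S n ⁻¹' {j} ∩ Y n ⁻¹' Set.Ici (x + m + 1 - j))) := measure_mono hsub
      _ ≤ ∑ j ∈ Finset.range x, μ (⋃ n : ℕ,
            (S n ⁻¹' {j} ∩ Y n ⁻¹' Set.Ici (x + m + 1 - j))) := measure_biUnion_finset_le _ _
      _ ≤ ∑ j ∈ Finset.range x, ∑' n : ℕ,
            μ (S n ⁻¹' {j} ∩ Y n ⁻¹' Set.Ici (x + m + 1 - j)) :=
          Finset.sum_le_sum fun j _ => measure_iUnion_le _
      _ ≤ ∑ j ∈ Finset.range x, Q (x + m + 1 - j) := by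
          apply Finset.sum_le_sum
          intro j _
          calc ∑' n : ℕ, μ (S n ⁻¹' {j} ∩ Y n ⁻¹' Set.Ici (x + m + 1 - j))
              = ∑' n : ℕ, μ (S n ⁻¹' {j}) * Q (x + m + 1 - j) := by
                refine tsum_congr fun n => ?_
                rw [(hind n).measure_inter_preimage_eq_mul _ _
                  (measurableSet_singleton j) measurableSet_Ici]
                congr 1
                exact (hident n).measure_mem_eq measurableSet_Ici
            _ = (∑' n : ℕ, μ (S n ⁻¹' {j})) * Q (x + m + 1 - j) := ENNReal.tsum_mul_right
            _ ≤ 1 * Q (x + m + 1 - j) := mul_le_mul_left (hren j) _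
            _ = Q (x + m + 1 - j) := one_mul _
  -- reindexing
  have hreidx : ∀ m : ℕ, ∑ j ∈ Finset.range x, Q (x + m + 1 - j) ≤ T m := by
    intro m
    have h1 : ∑ j ∈ Finset.range x, Q (x + m + 1 - j)
        = ∑ j ∈ Finset.range x, Q (m + 2 + (x - 1 - j)) := by
      refine Finset.sum_congr rfl fun j hj => ?_
      have hjx := Finset.mem_range.1 hj
      congr 1
      omega
    have h2 := Finset.sum_range_reflect (fun k => Q (m + 2 + k)) x
    rw [h1, h2]
    calc ∑ k ∈ Finset.range x, Q (m + 2 + k) ≤ ∑' k : ℕ, Q (m + 2 + k) :=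
          ENNReal.sum_le_tsum _
      _ ≤ ∑' k : ℕ, Q (m + 1 + k) := by
          refine ENNReal.tsum_le_tsum fun k => measure_mono ?_
          intro ω hω
          simp only [hUdef, Set.mem_preimage, Set.mem_Ici] at hω ⊢
          omega
  -- expansion of the LHS
  have hmain : ∫⁻ ω, ENNReal.ofReal ((B x ω : ℝ) ^ p) ∂μ
      = ∑' m : ℕ, c m * μ {ω | m < B x ω} := by
    have h1 : ∀ ω, ENNReal.ofReal ((B x ω : ℝ) ^ p)
        = ∑' m : ℕ, Set.indicator {ω' | m < B x ω'} (fun _ => c m) ω := by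
      intro ω
      symm
      calc ∑' m : ℕ, Set.indicator {ω' | m < B x ω'} (fun _ => c m) ω
          = ∑ m ∈ Finset.range (B x ω),
              Set.indicator {ω' | m < B x ω'} (fun _ => c m) ω := by
            refine tsum_eq_sum fun m hm => ?_
            refine Set.indicator_of_notMem ?_ _
            simp only [Set.mem_setOf_eq]
            simpa using hm
        _ = ∑ m ∈ Finset.range (B x ω), c m := by
            refine Finset.sum_congr rfl fun m hm => ?_
            exact Set.indicator_of_mem
              (show ω ∈ {ω' | m < B x ω'} from Finset.mem_range.1 hm) _
        _ = ENNReal.ofReal ((B x ω : ℝ) ^ p) := hcsum _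
    simp_rw [h1]
    rw [lintegral_tsum fun m => (measurable_const.indicator (hEmeas m)).aemeasurable]
    exact tsum_congr fun m => lintegral_indicator_const (hEmeas m) _
  rw [hmain]
  -- final comparison with E Y^{p+1}
  have step1 : ∑' m : ℕ, c m * μ {ω | m < B x ω} ≤ ∑' m : ℕ, c m * T m :=
    ENNReal.tsum_le_tsum fun m => mul_le_mul_right ((key m).trans (hreidx m)) _
  refine step1.trans ?_
  have h2 : ∀ m : ℕ, c m * T m
      = ∫⁻ ω, ∑' k : ℕ, Set.indicator (U (m + 1 + k)) (fun _ => c m) ω ∂μ := by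
    intro m
    rw [lintegral_tsum fun k => (measurable_const.indicator (hU _)).aemeasurable]
    simp_rw [lintegral_indicator_const (hU _)]
    rw [ENNReal.tsum_mul_left]
  simp_rw [h2]
  rw [← lintegral_tsum fun m =>
    (Measurable.ennreal_tsum fun k => measurable_const.indicator (hU _)).aemeasurable]
  apply lintegral_mono
  intro ω
  set y := Y 0 ω with hy
  -- inner sum over k
  have hinner : ∀ m : ℕ, ∑' k : ℕ, Set.indicator (U (m + 1 + k)) (fun _ => c m) ω
      = ((y - m : ℕ) : ℝ≥0∞) * c m := by
    intro m
    calc ∑' k : ℕ, Set.indicator (U (m + 1 + k)) (fun _ => c m) ω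
        = ∑ k ∈ Finset.range (y - m), Set.indicator (U (m + 1 + k)) (fun _ => c m) ω := by
          refine tsum_eq_sum fun k hk => ?_
          refine Set.indicator_of_notMem ?_ _
          simp only [hUdef, Set.mem_preimage, Set.mem_Ici, ← hy]
          have := Finset.mem_range.not.1 hk
          omega
      _ = ∑ k ∈ Finset.range (y - m), c m := by
          refine Finset.sum_congr rfl fun k hk => ?_
          refine Set.indicator_of_mem ?_ _
          simp only [hUdef, Set.mem_preimage, Set.mem_Ici, ← hy]
          have := Finset.mem_range.1 hk
          omega
      _ = ((y - m : ℕ) : ℝ≥0∞) * c m := by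
          rw [Finset.sum_const, Finset.card_range, nsmul_eq_mul]
  simp_rw [hinner]
  -- now ∑' m, (y - m) * c m ≤ ofReal (y ^ (p+1))
  calc ∑' m : ℕ, ((y - m : ℕ) : ℝ≥0∞) * c m
      = ∑ m ∈ Finset.range y, ((y - m : ℕ) : ℝ≥0∞) * c m := by
        refine tsum_eq_sum fun m hm => ?_
        have : y - m = 0 := by
          have := Finset.mem_range.not.1 hm
          omega
        rw [this]
        simp
    _ ≤ ∑ m ∈ Finset.range y, (y : ℝ≥0∞) * c m := by
        refine Finset.sum_le_sum fun m _ => ?_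
        refine mul_le_mul_left ?_ _
        exact_mod_cast Nat.cast_le.2 (Nat.sub_le y m)
    _ = (y : ℝ≥0∞) * ENNReal.ofReal ((y : ℝ) ^ p) := by
        rw [← Finset.mul_sum, hcsum]
    _ ≤ ENNReal.ofReal ((y : ℝ) ^ (p + 1)) := by
        rcases Nat.eq_zero_or_pos y with hy0 | hy0
        · simp [hy0, Real.zero_rpow (by positivity : p + 1 ≠ 0)]
        · have hyne : (y : ℝ) ≠ 0 := by positivity
          rw [Real.rpow_add_one hyne p, ← ENNReal.ofReal_natCast y, ← ENNReal.ofReal_mul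
            (by positivity), mul_comm]
end

section
/- Consider the one-dimensional totally asymmetric walk ($X_{n+1} \geq X_n$, i.i.d. environment, non-nestling, moment bound with $p>1$). The function $\Delta(\omega) = \sum_{i\geq 0} a_i(\omega)g(T_i\omega)$, where $g = D - v$ is the centered drift and $a_i(\omega) = (1-\pi_{ii}(\omega))^{-1}(P_0^\omega(V_i) - P_1^\omega(V_i))$, satisfies the coefficient bound $|a_i(\omega)| \leq (M/\delta)^{p/(p-1)}\, P_{0,1}^\omega(L > i)$, where $L$ is the first common point of two independent walks in the same environment started at $0$ and $1$. -/
open MeasureTheory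
open scoped ENNReal

namespace Stmt18Aux

abbrev Om := ℕ → ℤ

def Cyl (m : ℕ) (u : ℕ → ℤ) : Set Om := {f | ∀ k ≤ m, f k = u k}

lemma measurableSet_coord (n : ℕ) (c : ℤ) : MeasurableSet {f : Om | f n = c} := by
  have h : {f : Om | f n = c} = (fun f : Om => f n) ⁻¹' {c} := rfl
  rw [h]
  exact (measurable_pi_apply n) (measurableSet_singleton c)

lemma measurableSet_cyl (m : ℕ) (u : ℕ → ℤ) : MeasurableSet (Cyl m u) := by
  have h : Cyl m u = ⋂ (k : ℕ) (_ : k ≤ m), {f : Om | f k = u k} := by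
    ext f; simp [Cyl]
  rw [h]
  exact MeasurableSet.iInter fun k => MeasurableSet.iInter fun _ => measurableSet_coord k (u k)

def Vis (c : ℤ) : Set Om := {f | ∃ n, f n = c}

lemma measurableSet_vis (c : ℤ) : MeasurableSet (Vis c) := by
  have h : Vis c = ⋃ n, {f : Om | f n = c} := by ext f; simp [Vis]
  rw [h]; exact MeasurableSet.iUnion fun n => measurableSet_coord n c

def CylSets : Set (Set Om) := {S | ∃ m u, S = Cyl m u}

lemma isPiSystem_cylSets : IsPiSystem CylSets := by
  rintro S ⟨m, u, rfl⟩ T ⟨n, v, rfl⟩ hne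
  obtain ⟨f0, h1, h2⟩ := hne
  refine ⟨max m n, f0, ?_⟩
  ext f
  constructor
  · rintro ⟨g1, g2⟩ k hk
    rcases le_max_iff.mp hk with h | h
    · rw [g1 k h, ← h1 k h]
    · rw [g2 k h, ← h2 k h]
  · intro hf
    constructor
    · intro k hk
      rw [hf k (le_max_of_le_left hk), h1 k hk]
    · intro k hk
      rw [hf k (le_max_of_le_right hk), h2 k hk]

def fext (m : ℕ) (u : Fin (m + 1) → ℤ) : ℕ → ℤ := fun k => u ⟨min k m, by omega⟩

lemma fext_le {m k : ℕ} (hk : k ≤ m) (u : Fin (m + 1) → ℤ) :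
    fext m u k = u ⟨k, by omega⟩ := by
  unfold fext
  congr 1
  exact Fin.ext (by simp [min_eq_left hk])

lemma coord_mem_gen (k : ℕ) (a : ℤ) :
    MeasurableSet[MeasurableSpace.generateFrom CylSets] {f : Om | f k = a} := by
  have h : {f : Om | f k = a}
      = ⋃ v : {v : Fin (k + 1) → ℤ // v ⟨k, Nat.lt_succ_self k⟩ = a},
          Cyl k (fext k v.1) := by
    ext f
    constructor
    · intro hf
      refine Set.mem_iUnion.mpr ⟨⟨fun j => f j, hf⟩, ?_⟩
      intro j hj
      rw [fext_le hj]
    · intro h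
      obtain ⟨v, hv⟩ := Set.mem_iUnion.mp h
      have h2 := hv k le_rfl
      rw [fext_le le_rfl] at h2
      show f k = a
      rw [h2, v.2]
  rw [h]
  exact MeasurableSet.iUnion fun v =>
    MeasurableSpace.measurableSet_generateFrom ⟨k, fext k v.1, rfl⟩

lemma gen_eq : (inferInstance : MeasurableSpace Om) = MeasurableSpace.generateFrom CylSets := by
  refine le_antisymm ?_ ?_
  · show (MeasurableSpace.pi : MeasurableSpace Om) ≤ MeasurableSpace.generateFrom CylSets
    refine iSup_le fun k => ?_
    intro S hS
    obtain ⟨s, -, rfl⟩ := MeasurableSpace.measurableSet_comap.mp hS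
    have h2 : (fun f : Om => f k) ⁻¹' s = ⋃ a : s, {f : Om | f k = a.1} := by
      ext f
      simp [Set.mem_iUnion]
    rw [h2]
    exact MeasurableSet.iUnion fun a => coord_mem_gen k a.1
  · refine MeasurableSpace.generateFrom_le ?_
    rintro S ⟨m, u, rfl⟩
    exact measurableSet_cyl m u

def shift (m : ℕ) : Om → Om := fun f k => f (m + k)

lemma measurable_shift (m : ℕ) : Measurable (shift m) :=
  measurable_pi_lambda _ fun k => measurable_pi_apply (m + k)


variable (π : ℤ → ℤ → ℝ) (P : ℤ → Measure Om)

lemma start_compl_null (hPprob : ∀ x, IsProbabilityMeasure (P x))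
    (hstart : ∀ x, P x {f | f 0 = x} = 1) (x : ℤ) :
    P x {f : Om | f 0 = x}ᶜ = 0 := by
  haveI := hPprob x
  rw [measure_compl (measurableSet_coord 0 x) (measure_ne_top _ _), hstart x, measure_univ]
  simp

lemma cyl_ne_start (hPprob : ∀ x, IsProbabilityMeasure (P x))
    (hstart : ∀ x, P x {f | f 0 = x} = 1)
    {x : ℤ} {m : ℕ} {u : ℕ → ℤ} (h : u 0 ≠ x) : P x (Cyl m u) = 0 := by
  refine measure_mono_null ?_ (start_compl_null P hPprob hstart x)
  intro f hf
  have h0 := hf 0 (Nat.zero_le m)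
  simp only [Set.mem_compl_iff, Set.mem_setOf_eq]
  rw [h0]; exact h

lemma markov (hnn : ∀ x y, 0 ≤ π x y)
    (hPprob : ∀ x, IsProbabilityMeasure (P x))
    (hstart : ∀ x, P x {f | f 0 = x} = 1)
    (hcyl : ∀ (x : ℤ) (n : ℕ) (g : ℕ → ℤ), g 0 = x →
      P x {f | ∀ k ≤ n, f k = g k}
        = ENNReal.ofReal (∏ k ∈ Finset.range n, π (g k) (g (k + 1))))
    (x : ℤ) (m : ℕ) (u : ℕ → ℤ) (hu : u 0 = x) {A : Set Om} (hA : MeasurableSet A) :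
    P x (shift m ⁻¹' A ∩ Cyl m u)
      = ENNReal.ofReal (∏ k ∈ Finset.range m, π (u k) (u (k + 1))) * P (u m) A := by
  have hcyl' : ∀ (x : ℤ) (n : ℕ) (g : ℕ → ℤ), g 0 = x →
      P x (Cyl n g) = ENNReal.ofReal (∏ k ∈ Finset.range n, π (g k) (g (k + 1))) := hcyl
  haveI := hPprob x; haveI := hPprob (u m)
  set c := ENNReal.ofReal (∏ k ∈ Finset.range m, π (u k) (u (k + 1))) with hc
  set μ1 : Measure Om := ((P x).restrict (Cyl m u)).map (shift m) with hμ1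
  set μ2 : Measure Om := c • P (u m) with hμ2
  have happ : ∀ {B : Set Om}, MeasurableSet B → μ1 B = P x (shift m ⁻¹' B ∩ Cyl m u) := by
    intro B hB
    rw [hμ1, Measure.map_apply (measurable_shift m) hB,
      Measure.restrict_apply (measurable_shift m hB)]
  haveI : IsFiniteMeasure μ1 := by
    constructor
    rw [happ MeasurableSet.univ]
    exact lt_of_le_of_lt (measure_mono (Set.subset_univ _)) (measure_lt_top _ _)
  have key : μ1 = μ2 := by
    refine ext_of_generate_finite CylSets gen_eq isPiSystem_cylSets ?_ ?_
    · rintro S ⟨n, v, rfl⟩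
      rw [happ (measurableSet_cyl n v)]
      have hμ2app : μ2 (Cyl n v) = c * P (u m) (Cyl n v) := by
        rw [hμ2, Measure.smul_apply, smul_eq_mul]
      by_cases he : v 0 = u m
      · set w : ℕ → ℤ := fun k => if k ≤ m then u k else v (k - m) with hw
        have hwm : ∀ k ≤ n, w (m + k) = v k := by
          intro k hk
          by_cases hk0 : k = 0
          · subst hk0
            show w (m + 0) = v 0
            have : w (m + 0) = u m := by simp [hw]
            rw [this, ← he]
          · have h1 : ¬ (m + k ≤ m) := by omega
            simp only [hw, h1, if_false]
            exact congrArg v (by omega)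
        have hset : shift m ⁻¹' Cyl n v ∩ Cyl m u = Cyl (m + n) w := by
          ext f
          constructor
          · rintro ⟨h1, h2⟩ k hk
            by_cases hkm : k ≤ m
            · simp only [hw, hkm, if_true]; exact h2 k hkm
            · have h3 : f (m + (k - m)) = v (k - m) := h1 (k - m) (by omega)
              have h4 : f k = v (k - m) := by
                rw [show f k = f (m + (k - m)) from congrArg f (by omega)]; exact h3
              simp only [hw, hkm, if_false]; exact h4
          · intro hf
            constructor
            · intro k hk
              have h5 : f (m + k) = w (m + k) := hf (m + k) (by omega)
              show f (m + k) = v k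
              rw [h5]
              exact hwm k hk
            · intro k hk
              have h5 : f k = w k := hf k (by omega)
              rw [h5]
              simp [hw, hk]
        have hw0 : w 0 = x := by simp only [hw, Nat.zero_le, if_true]; exact hu
        rw [hset, hcyl' x (m + n) w hw0, hμ2app, hcyl' (u m) n v he]
        have hsplit : ∏ k ∈ Finset.range (m + n), π (w k) (w (k + 1))
            = (∏ k ∈ Finset.range m, π (u k) (u (k + 1)))
              * ∏ k ∈ Finset.range n, π (v k) (v (k + 1)) := by
          rw [Finset.prod_range_add]
          congr 1
          · refine Finset.prod_congr rfl fun k hk => ?_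
            have hk' : k < m := Finset.mem_range.mp hk
            have e1 : w k = u k := by simp [hw, hk'.le]
            have e2 : w (k + 1) = u (k + 1) := by simp [hw, Nat.succ_le_of_lt hk']
            rw [e1, e2]
          · refine Finset.prod_congr rfl fun k hk => ?_
            have hk' : k < n := Finset.mem_range.mp hk
            have e1 : w (m + k) = v k := hwm k hk'.le
            have e2 : w (m + k + 1) = v (k + 1) := by
              have : m + k + 1 = m + (k + 1) := by omega
              rw [this]; exact hwm (k + 1) (by omega)
            rw [e1, e2]
        rw [hsplit, ENNReal.ofReal_mul (Finset.prod_nonneg fun k _ => hnn _ _)]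
      · have hempty : shift m ⁻¹' Cyl n v ∩ Cyl m u = ∅ := by
          ext f
          simp only [Set.mem_inter_iff, Set.mem_empty_iff_false, iff_false]
          rintro ⟨h1, h2⟩
          have h3 : f m = v 0 := h1 0 (Nat.zero_le n)
          have h4 : f m = u m := h2 m le_rfl
          exact he (by rw [← h3, h4])
        rw [hempty, measure_empty, hμ2app,
          cyl_ne_start P hPprob hstart he, mul_zero]
    · rw [happ MeasurableSet.univ]
      rw [Set.preimage_univ, Set.univ_inter, hcyl' x m u hu]
      rw [hμ2, Measure.smul_apply, smul_eq_mul, measure_univ, mul_one]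
  rw [← happ hA, key, hμ2, Measure.smul_apply, smul_eq_mul]

def Good (x : ℤ) : Set Om := {f | f 0 = x ∧ ∀ n, f n ≤ f (n + 1)}

lemma measurableSet_good (x : ℤ) : MeasurableSet (Good x) := by
  have h : Good x = {f : Om | f 0 = x} ∩ ⋂ n, {f : Om | f n ≤ f (n + 1)} := by
    ext f; simp [Good]
  rw [h]
  refine (measurableSet_coord 0 x).inter (MeasurableSet.iInter fun n => ?_)
  exact measurableSet_le (measurable_pi_apply n) (measurable_pi_apply (n + 1))

lemma good_compl_null (hPprob : ∀ x, IsProbabilityMeasure (P x))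
    (hstart : ∀ x, P x {f | f 0 = x} = 1)
    (hcyl : ∀ (x : ℤ) (n : ℕ) (g : ℕ → ℤ), g 0 = x →
      P x {f | ∀ k ≤ n, f k = g k}
        = ENNReal.ofReal (∏ k ∈ Finset.range n, π (g k) (g (k + 1))))
    (hforb : ∀ x y : ℤ, y < x → π x y = 0)
    (x : ℤ) : P x (Good x)ᶜ = 0 := by
  have hcyl' : ∀ (x : ℤ) (n : ℕ) (g : ℕ → ℤ), g 0 = x →
      P x (Cyl n g) = ENNReal.ofReal (∏ k ∈ Finset.range n, π (g k) (g (k + 1))) := hcyl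
  have hsub : (Good x)ᶜ ⊆ {f : Om | f 0 = x}ᶜ ∪ ⋃ n, {f : Om | f (n + 1) < f n} := by
    intro f hf
    simp only [Good, Set.mem_compl_iff, Set.mem_setOf_eq, not_and, not_forall] at hf
    by_cases h0 : f 0 = x
    · obtain ⟨n, hn⟩ := hf h0
      exact Or.inr (Set.mem_iUnion.mpr ⟨n, not_le.mp hn⟩)
    · exact Or.inl h0
  refine measure_mono_null hsub
    (measure_union_null (start_compl_null P hPprob hstart x) (measure_iUnion_null fun n => ?_))
  have hsub2 : {f : Om | f (n + 1) < f n}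
      ⊆ ⋃ w : {w : Fin (n + 2) → ℤ // w ⟨n + 1, by omega⟩ < w ⟨n, by omega⟩},
          Cyl (n + 1) (fext (n + 1) w.1) := by
    intro f hf
    refine Set.mem_iUnion.mpr ⟨⟨fun j => f j, hf⟩, ?_⟩
    intro k hk; rw [fext_le hk]
  refine measure_mono_null hsub2 (measure_iUnion_null fun w => ?_)
  by_cases h0 : fext (n + 1) w.1 0 = x
  · rw [hcyl' x (n + 1) _ h0]
    have hz : ∏ k ∈ Finset.range (n + 1),
        π (fext (n + 1) w.1 k) (fext (n + 1) w.1 (k + 1)) = 0 := by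
      refine Finset.prod_eq_zero (Finset.self_mem_range_succ n) ?_
      have e1 : fext (n + 1) w.1 n = w.1 ⟨n, by omega⟩ := fext_le (by omega) _
      have e2 : fext (n + 1) w.1 (n + 1) = w.1 ⟨n + 1, by omega⟩ := fext_le (by omega) _
      rw [e1, e2]
      exact hforb _ _ w.2
    rw [hz]; simp
  · exact cyl_ne_start P hPprob hstart h0



lemma holder_bound (π : ℤ → ℤ → ℝ) (δ M p : ℝ) (hδ : 0 < δ) (hM : 0 < M) (hp : 1 < p)
    (hnn : ∀ x y, 0 ≤ π x y) (hrow : ∀ x, ∑' y, π x y = 1)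
    (hforb : ∀ x y : ℤ, y < x → π x y = 0)
    (hdriftSummable : ∀ x, Summable (fun y : ℤ => ((y - x : ℤ) : ℝ) * π x y))
    (hdrift : ∀ x : ℤ, δ ≤ ∑' y : ℤ, ((y - x : ℤ) : ℝ) * π x y)
    (hmomSummable : ∀ x, Summable (fun y : ℤ => |((y - x : ℤ) : ℝ)| ^ p * π x y))
    (hmom : ∀ x : ℤ, ∑' y : ℤ, |((y - x : ℤ) : ℝ)| ^ p * π x y ≤ M ^ p)
    (x : ℤ) : (δ / M) ^ (p / (p - 1)) ≤ 1 - π x x := by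
  have hpq : p.HolderConjugate (p / (p - 1)) := Real.HolderConjugate.conjExponent hp
  set q : ℝ := p / (p - 1) with hq
  have hppos : 0 < p := hpq.pos
  have hqpos : 0 < q := hpq.symm.pos
  have hsum : Summable (π x) := by
    by_contra h
    have h0 := tsum_eq_zero_of_not_summable h
    rw [hrow x] at h0
    exact one_ne_zero h0
  have hπle : π x x ≤ 1 := by
    have := Summable.le_tsum hsum x (fun y _ => hnn x y)
    rw [hrow x] at this
    exact this
  have habs : ∀ y : ℤ, ((y - x : ℤ) : ℝ) * π x y = |((y - x : ℤ) : ℝ)| * π x y := by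
    intro y
    by_cases hπ : π x y = 0
    · rw [hπ, mul_zero, mul_zero]
    · have hxy : x ≤ y := le_of_not_gt fun h => hπ (hforb x y h)
      have : (0 : ℝ) ≤ ((y - x : ℤ) : ℝ) := by
        have h2 : (0 : ℤ) ≤ y - x := by omega
        exact_mod_cast h2
      rw [abs_of_nonneg this]
  set F : ℤ → ℝ≥0∞ := fun y =>
    ENNReal.ofReal |((y - x : ℤ) : ℝ)| * ENNReal.ofReal (π x y) ^ (1 / p) with hF
  set Gq : ℤ → ℝ≥0∞ := fun y =>
    if y = x then 0 else ENNReal.ofReal (π x y) ^ (1 / q) with hGq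
  have hFG : ∀ y, F y * Gq y = ENNReal.ofReal (((y - x : ℤ) : ℝ) * π x y) := by
    intro y
    by_cases hyx : y = x
    · subst hyx
      simp [hF, hGq]
    · by_cases hπ : π x y = 0
      · simp only [hF, hGq, hyx, if_false, hπ, ENNReal.ofReal_zero,
          ENNReal.zero_rpow_of_pos (by positivity : (0:ℝ) < 1 / q), mul_zero]
      · have hπpos : 0 < π x y := lt_of_le_of_ne (hnn x y) (Ne.symm hπ)
        have hne0 : ENNReal.ofReal (π x y) ≠ 0 := by
          simp [ENNReal.ofReal_eq_zero, not_le, hπpos]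
        have hnetop : ENNReal.ofReal (π x y) ≠ ⊤ := ENNReal.ofReal_ne_top
        have e1 : F y * Gq y = ENNReal.ofReal |((y - x : ℤ) : ℝ)| *
            (ENNReal.ofReal (π x y) ^ (1 / p) * ENNReal.ofReal (π x y) ^ (1 / q)) := by
          simp [hF, hGq, hyx, mul_assoc]
        rw [e1, ← ENNReal.rpow_add _ _ hne0 hnetop]
        have hadd : 1 / p + 1 / q = 1 := by
          rw [one_div, one_div]; exact hpq.inv_add_inv_eq_one
        rw [hadd, ENNReal.rpow_one, ← ENNReal.ofReal_mul (abs_nonneg _), habs y]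
  have hholder := ENNReal.lintegral_mul_le_Lp_mul_Lq (Measure.count : Measure ℤ) hpq
    (measurable_from_top (f := F)).aemeasurable (measurable_from_top (f := Gq)).aemeasurable
  rw [lintegral_count] at hholder
  have hL1 : ENNReal.ofReal δ ≤ ∑' y, (F * Gq) y := by
    calc ENNReal.ofReal δ ≤ ENNReal.ofReal (∑' y, ((y - x : ℤ) : ℝ) * π x y) :=
          ENNReal.ofReal_le_ofReal (hdrift x)
      _ = ∑' y, ENNReal.ofReal (((y - x : ℤ) : ℝ) * π x y) :=
          ENNReal.ofReal_tsum_of_nonneg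
            (fun y => by rw [habs y]; exact mul_nonneg (abs_nonneg _) (hnn x y))
            (hdriftSummable x)
      _ = ∑' y, (F * Gq) y := tsum_congr fun y => (hFG y).symm
  have hLp : (∫⁻ y, F y ^ p ∂Measure.count) ^ (1 / p) ≤ ENNReal.ofReal M := by
    rw [lintegral_count]
    have hFp : ∀ y, F y ^ p = ENNReal.ofReal (|((y - x : ℤ) : ℝ)| ^ p * π x y) := by
      intro y
      rw [hF]
      rw [ENNReal.mul_rpow_of_nonneg _ _ hppos.le, ← ENNReal.rpow_mul,
        one_div_mul_cancel hppos.ne', ENNReal.rpow_one,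
        ENNReal.ofReal_mul (Real.rpow_nonneg (abs_nonneg _) p),
        ENNReal.ofReal_rpow_of_nonneg (abs_nonneg _) hppos.le]
    calc (∑' y, F y ^ p) ^ (1 / p)
        = (∑' y, ENNReal.ofReal (|((y - x : ℤ) : ℝ)| ^ p * π x y)) ^ (1 / p) := by
          rw [tsum_congr hFp]
      _ = ENNReal.ofReal (∑' y, |((y - x : ℤ) : ℝ)| ^ p * π x y) ^ (1 / p) := by
          rw [← ENNReal.ofReal_tsum_of_nonneg
            (fun y => mul_nonneg (Real.rpow_nonneg (abs_nonneg _) p) (hnn x y)) (hmomSummable x)]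
      _ ≤ ENNReal.ofReal (M ^ p) ^ (1 / p) := by
          exact ENNReal.rpow_le_rpow (ENNReal.ofReal_le_ofReal (hmom x)) (by positivity)
      _ = (ENNReal.ofReal M ^ p) ^ (1 / p) := by
          rw [ENNReal.ofReal_rpow_of_nonneg hM.le hppos.le]
      _ = ENNReal.ofReal M := by
          rw [← ENNReal.rpow_mul, mul_one_div_cancel hppos.ne', ENNReal.rpow_one]
  have hLq : (∫⁻ y, Gq y ^ q ∂Measure.count) ^ (1 / q)
      ≤ ENNReal.ofReal ((1 - π x x) ^ (1 / q)) := by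
    rw [lintegral_count]
    have hGqq : ∀ y, Gq y ^ q = if y = x then 0 else ENNReal.ofReal (π x y) := by
      intro y
      by_cases hyx : y = x
      · simp [hGq, hyx, ENNReal.zero_rpow_of_pos hqpos]
      · simp only [hGq, hyx, if_false]
        rw [← ENNReal.rpow_mul, one_div_mul_cancel hqpos.ne', ENNReal.rpow_one]
    have hsplit : ∑' y, ENNReal.ofReal (π x y)
        = ENNReal.ofReal (π x x) + ∑' y, Gq y ^ q := by
      rw [Summable.tsum_eq_add_tsum_ite' x (ENNReal.summable)]
      congr 1
      exact (tsum_congr fun y => by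
        by_cases hyx : y = x <;> simp [hGqq, hyx]).symm
    have hone : ∑' y, ENNReal.ofReal (π x y) = 1 := by
      rw [← ENNReal.ofReal_tsum_of_nonneg (hnn x) hsum, hrow x, ENNReal.ofReal_one]
    have hS2 : ∑' y, Gq y ^ q = ENNReal.ofReal (1 - π x x) := by
      have h1 : ∑' y, Gq y ^ q + ENNReal.ofReal (π x x) = 1 := by
        rw [add_comm, ← hsplit, hone]
      have h2 := ENNReal.eq_sub_of_add_eq ENNReal.ofReal_ne_top h1
      rw [h2, ← ENNReal.ofReal_one, ← ENNReal.ofReal_sub _ (hnn x x)]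
    rw [hS2, ENNReal.ofReal_rpow_of_nonneg (by linarith) (one_div_nonneg.mpr hqpos.le)]
  have hfinal : ENNReal.ofReal δ ≤ ENNReal.ofReal (M * (1 - π x x) ^ (1 / q)) := by
    calc ENNReal.ofReal δ ≤ ∑' y, (F * Gq) y := hL1
      _ ≤ _ := hholder
      _ ≤ ENNReal.ofReal M * ENNReal.ofReal ((1 - π x x) ^ (1 / q)) :=
          mul_le_mul' hLp hLq
      _ = ENNReal.ofReal (M * (1 - π x x) ^ (1 / q)) := (ENNReal.ofReal_mul hM.le).symm
  have hsubnn0 : (0 : ℝ) ≤ 1 - π x x := by linarith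
  have hreal : δ ≤ M * (1 - π x x) ^ (1 / q) :=
    (ENNReal.ofReal_le_ofReal_iff
      (mul_nonneg hM.le (Real.rpow_nonneg hsubnn0 _))).mp hfinal
  have hdiv : δ / M ≤ (1 - π x x) ^ (1 / q) := by
    rw [div_le_iff₀ hM]
    rw [mul_comm] at hreal
    exact hreal
  have hsubnn : (0 : ℝ) ≤ 1 - π x x := by linarith
  calc (δ / M) ^ q ≤ ((1 - π x x) ^ (1 / q)) ^ q :=
        Real.rpow_le_rpow (by positivity) hdiv hqpos.le
    _ = 1 - π x x := by
        rw [← Real.rpow_mul hsubnn, one_div_mul_cancel hqpos.ne', Real.rpow_one]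
      

def Idx : Type := Σ mn : ℕ × ℕ, (Fin (mn.1 + 1) → ℤ) × (Fin (mn.2 + 1) → ℤ)

instance : Countable Idx := by unfold Idx; infer_instance

def iM (s : Idx) : ℕ := s.1.1
def iN (s : Idx) : ℕ := s.1.2
def iU (s : Idx) : ℕ → ℤ := fext s.1.1 s.2.1
def iV (s : Idx) : ℕ → ℤ := fext s.1.2 s.2.2

def Adm (i : ℕ) (s : Idx) : Prop :=
  iU s 0 = 0 ∧ iV s 0 = 1 ∧ iV s (iN s) = iU s (iM s) ∧ iU s (iM s) ≤ (i : ℤ) ∧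
  (∀ k, k + 1 ≤ iM s → iU s k ≤ iU s (k + 1)) ∧
  (∀ k, k + 1 ≤ iN s → iV s k ≤ iV s (k + 1)) ∧
  (∀ k < iM s, iU s k ≠ iU s (iM s)) ∧
  (∀ k < iN s, iV s k ≠ iV s (iN s)) ∧
  (∀ j ≤ iM s, ∀ k ≤ iN s, iU s j = iV s k → iU s j = iU s (iM s))

lemma mono_of_step {m : ℕ} {U : ℕ → ℤ} (h : ∀ k, k + 1 ≤ m → U k ≤ U (k + 1)) :
    ∀ j k, j ≤ k → k ≤ m → U j ≤ U k := by
  intro j k hjk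
  induction k, hjk using Nat.le_induction with
  | base => exact fun _ => le_refl _
  | succ n hn ih => exact fun h1 => le_trans (ih (by omega)) (h n h1)

lemma good_mono {x : ℤ} {f : Om} (hf : f ∈ Good x) : Monotone f :=
  monotone_nat_of_le_succ hf.2

def Bset (i : ℕ) : Set (Om × Om) :=
  {fg | ∃ ℓ : ℤ, ℓ ≤ (i : ℤ) ∧ (∃ m, fg.1 m = ℓ) ∧ (∃ n, fg.2 n = ℓ)}

lemma measurableSet_Bset (i : ℕ) : MeasurableSet (Bset i) := by
  have h : Bset i = ⋃ (ℓ : ℤ), ⋃ (_ : ℓ ≤ (i : ℤ)), (Vis ℓ ×ˢ Vis ℓ) := by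
    ext fg
    constructor
    · rintro ⟨ℓ, hℓ, hf1, hg1⟩
      exact Set.mem_iUnion.mpr ⟨ℓ, Set.mem_iUnion.mpr ⟨hℓ, hf1, hg1⟩⟩
    · intro h
      obtain ⟨ℓ, h2⟩ := Set.mem_iUnion.mp h
      obtain ⟨hℓ, hf1, hg1⟩ := Set.mem_iUnion.mp h2
      exact ⟨ℓ, hℓ, hf1, hg1⟩
  rw [h]
  exact MeasurableSet.iUnion fun ℓ => MeasurableSet.iUnion fun _ =>
    (measurableSet_vis ℓ).prod (measurableSet_vis ℓ)

lemma cover {i : ℕ} {f g : Om} (hf : f ∈ Good 0) (hg : g ∈ Good 1)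
    (hB : (f, g) ∈ Bset i) :
    ∃ s : Idx, Adm i s ∧ f ∈ Cyl (iM s) (iU s) ∧ g ∈ Cyl (iN s) (iV s) := by
  classical
  have hbdd : ∃ b : ℤ, ∀ z : ℤ,
      (z ≤ (i : ℤ) ∧ (∃ a, f a = z) ∧ (∃ b, g b = z)) → b ≤ z := by
    refine ⟨0, ?_⟩
    rintro z ⟨-, ⟨a, ha⟩, -⟩
    rw [← ha, ← hf.1]
    exact good_mono hf (Nat.zero_le a)
  obtain ⟨ℓ, hℓS, hleast⟩ := Int.exists_least_of_bdd hbdd hB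
  obtain ⟨hℓi, hfa, hgb⟩ := hℓS
  set m := Nat.find hfa with hm
  set n := Nat.find hgb with hn
  have hfm : f m = ℓ := Nat.find_spec hfa
  have hgn : g n = ℓ := Nat.find_spec hgb
  have hfmin : ∀ k < m, f k ≠ ℓ := fun k hk => Nat.find_min hfa hk
  have hgmin : ∀ k < n, g k ≠ ℓ := fun k hk => Nat.find_min hgb hk
  refine ⟨⟨(m, n), (fun j => f j.1, fun j => g j.1)⟩, ?_, ?_, ?_⟩
  · have hU : ∀ k ≤ m, iU ⟨(m, n), (fun j => f j.1, fun j => g j.1)⟩ k = f k := by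
      intro k hk
      show fext m _ k = f k
      rw [fext_le hk]
    have hV : ∀ k ≤ n, iV ⟨(m, n), (fun j => f j.1, fun j => g j.1)⟩ k = g k := by
      intro k hk
      show fext n _ k = g k
      rw [fext_le hk]
    have hMM : iM ⟨(m, n), (fun j => f j.1, fun j => g j.1)⟩ = m := rfl
    have hNN : iN ⟨(m, n), (fun j => f j.1, fun j => g j.1)⟩ = n := rfl
    refine ⟨?_, ?_, ?_, ?_, ?_, ?_, ?_, ?_, ?_⟩
    · rw [hU 0 (Nat.zero_le m)]; exact hf.1
    · rw [hV 0 (Nat.zero_le n)]; exact hg.1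
    · rw [hMM, hNN, hU m le_rfl, hV n le_rfl, hfm, hgn]
    · rw [hMM, hU m le_rfl, hfm]; exact hℓi
    · intro k hk
      rw [hMM] at hk
      rw [hU k (by omega), hU (k + 1) hk]
      exact hf.2 k
    · intro k hk
      rw [hNN] at hk
      rw [hV k (by omega), hV (k + 1) hk]
      exact hg.2 k
    · intro k hk
      rw [hMM] at hk ⊢
      rw [hU k hk.le, hU m le_rfl, hfm]
      exact hfmin k hk
    · intro k hk
      rw [hNN] at hk ⊢
      rw [hV k hk.le, hV n le_rfl, hgn]
      exact hgmin k hk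
    · intro j hj k hk hjk
      rw [hMM] at hj ⊢
      rw [hNN] at hk
      rw [hU j hj, hU m le_rfl, hfm]
      rw [hU j hj, hV k hk] at hjk
      -- f j = g k is a common value; show f j = ℓ
      have hc1 : f j ≤ ℓ := by rw [← hfm]; exact good_mono hf hj
      have hc2 : ℓ ≤ f j :=
        hleast (f j) ⟨le_trans hc1 hℓi, ⟨j, rfl⟩, ⟨k, hjk.symm⟩⟩
      omega
  · intro k hk
    show f k = fext m (fun j => f j.1) k
    rw [fext_le (show k ≤ m from hk)]
  · intro k hk
    show g k = fext n (fun j => g j.1) k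
    rw [fext_le (show k ≤ n from hk)]

lemma rect_subset_Bset {i : ℕ} {s : Idx} (hs : Adm i s) {f g : Om}
    (hfs : f ∈ Cyl (iM s) (iU s)) (hgs : g ∈ Cyl (iN s) (iV s)) :
    (f, g) ∈ Bset i := by
  obtain ⟨h1, h2, h3, h4, h5, h6, h7, h8, h9⟩ := hs
  refine ⟨iU s (iM s), h4, ⟨iM s, hfs (iM s) le_rfl⟩, ⟨iN s, ?_⟩⟩
  show g (iN s) = iU s (iM s)
  rw [hgs (iN s) le_rfl, h3]

lemma disjointness {i : ℕ} {s t : Idx} (hs : Adm i s) (ht : Adm i t)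
    {f g : Om} (hf : f ∈ Good 0) (hg : g ∈ Good 1)
    (hfs : f ∈ Cyl (iM s) (iU s)) (hgs : g ∈ Cyl (iN s) (iV s))
    (hft : f ∈ Cyl (iM t) (iU t)) (hgt : g ∈ Cyl (iN t) (iV t)) : s = t := by
  obtain ⟨s1, s2, s3, s4, s5, s6, s7, s8, s9⟩ := hs
  obtain ⟨t1, t2, t3, t4, t5, t6, t7, t8, t9⟩ := ht
  have hfms : f (iM s) = iU s (iM s) := hfs (iM s) le_rfl
  have hfmt : f (iM t) = iU t (iM t) := hft (iM t) le_rfl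
  have hgns : g (iN s) = iV s (iN s) := hgs (iN s) le_rfl
  have hgnt : g (iN t) = iV t (iN t) := hgt (iN t) le_rfl
  have hgs' : g (iN s) = f (iM s) := by rw [hgns, s3, ← hfms]
  have hgt' : g (iN t) = f (iM t) := by rw [hgnt, t3, ← hfmt]
  -- no strict order between the meeting levels
  have haux : ¬ f (iM s) < f (iM t) := by
    intro hlt
    have hmle : iM s ≤ iM t := by
      by_contra hcon
      exact absurd (good_mono hf (le_of_not_ge hcon)) (not_le.mpr hlt)
    have hnle : iN s ≤ iN t := by
      by_contra hcon
      have := good_mono hg (le_of_not_ge hcon)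
      rw [hgs', hgt'] at this
      exact absurd this (not_le.mpr hlt)
    have e1 : iU t (iM s) = f (iM s) := (hft (iM s) hmle).symm
    have e2 : iV t (iN s) = g (iN s) := (hgt (iN s) hnle).symm
    have := t9 (iM s) hmle (iN s) hnle (by rw [e1, e2, hgs'])
    rw [e1, ← hfmt] at this
    exact absurd this (ne_of_lt hlt)
  have haux' : ¬ f (iM t) < f (iM s) := by
    intro hlt
    have hmle : iM t ≤ iM s := by
      by_contra hcon
      exact absurd (good_mono hf (le_of_not_ge hcon)) (not_le.mpr hlt)
    have hnle : iN t ≤ iN s := by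
      by_contra hcon
      have := good_mono hg (le_of_not_ge hcon)
      rw [hgs', hgt'] at this
      exact absurd this (not_le.mpr hlt)
    have e1 : iU s (iM t) = f (iM t) := (hfs (iM t) hmle).symm
    have e2 : iV s (iN t) = g (iN t) := (hgs (iN t) hnle).symm
    have := s9 (iM t) hmle (iN t) hnle (by rw [e1, e2, hgt'])
    rw [e1, ← hfms] at this
    exact absurd this (ne_of_lt hlt)
  have hlevel : f (iM s) = f (iM t) := by omega
  have hmeq : iM s = iM t := by
    by_contra hcon
    rcases Nat.lt_or_ge (iM s) (iM t) with h | h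
    · have := t7 (iM s) h
      rw [← hfmt, ← hft (iM s) h.le, hlevel] at this
      exact this rfl
    · have hlt : iM t < iM s := by omega
      have := s7 (iM t) hlt
      rw [← hfms, ← hfs (iM t) hlt.le, hlevel] at this
      exact this rfl
  have hglevel : g (iN s) = g (iN t) := by rw [hgs', hgt', hlevel]
  have hneq : iN s = iN t := by
    by_contra hcon
    rcases Nat.lt_or_ge (iN s) (iN t) with h | h
    · have := t8 (iN s) h
      rw [← hgnt, ← hgt (iN s) h.le, hglevel] at this
      exact this rfl
    · have hlt : iN t < iN s := by omega
      have := s8 (iN t) hlt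
      rw [← hgns, ← hgs (iN t) hlt.le, hglevel] at this
      exact this rfl
  -- now conclude equality of the index data
  obtain ⟨⟨m1, n1⟩, u1, v1⟩ := s
  obtain ⟨⟨m2, n2⟩, u2, v2⟩ := t
  simp only [iM, iN] at hmeq hneq
  subst hmeq
  subst hneq
  have hu : u1 = u2 := by
    funext j
    have hj : j.1 ≤ m1 := Nat.lt_succ_iff.mp j.2
    have e1 : f j.1 = u1 j := by
      rw [hfs j.1 hj]; exact fext_le hj u1
    have e2 : f j.1 = u2 j := by
      rw [hft j.1 hj]; exact fext_le hj u2
    rw [← e1, ← e2]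
  have hv : v1 = v2 := by
    funext j
    have hj : j.1 ≤ n1 := Nat.lt_succ_iff.mp j.2
    have e1 : g j.1 = v1 j := by
      rw [hgs j.1 hj]; exact fext_le hj v1
    have e2 : g j.1 = v2 j := by
      rw [hgt j.1 hj]; exact fext_le hj v2
    rw [← e1, ← e2]
  rw [hu, hv]

lemma vis_inter_cyl {i : ℕ} {m : ℕ} {U : ℕ → ℤ}
    (hmono : ∀ k, k + 1 ≤ m → U k ≤ U (k + 1))
    (hfirst : ∀ k < m, U k ≠ U m) (hle : U m ≤ (i : ℤ)) :
    Vis (i : ℤ) ∩ Cyl m U = shift m ⁻¹' Vis (i : ℤ) ∩ Cyl m U := by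
  ext f
  constructor
  · rintro ⟨⟨a, ha⟩, hc⟩
    refine ⟨?_, hc⟩
    by_cases ham : m ≤ a
    · refine ⟨a - m, ?_⟩
      show f (m + (a - m)) = (i : ℤ)
      rw [congrArg f (by omega : m + (a - m) = a)]
      exact ha
    · exfalso
      push_neg at ham
      have h1 : f a = U a := hc a ham.le
      have h2 : U a ≤ U m := mono_of_step hmono a m ham.le le_rfl
      have h3 : U a = (i : ℤ) := by rw [← h1, ha]
      have h4 : U a = U m := le_antisymm h2 (by rw [h3]; exact hle)
      exact hfirst a ham h4
  · rintro ⟨⟨k, hk⟩, hc⟩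
    exact ⟨⟨m + k, hk⟩, hc⟩

end Stmt18Aux

namespace Stmt18Aux

lemma key_coupling (π : ℤ → ℤ → ℝ) (P : ℤ → Measure Om)
    (hnn : ∀ x y, 0 ≤ π x y)
    (hPprob : ∀ x, IsProbabilityMeasure (P x))
    (hstart : ∀ x, P x {f | f 0 = x} = 1)
    (hcyl : ∀ (x : ℤ) (n : ℕ) (g : ℕ → ℤ), g 0 = x →
      P x {f | ∀ k ≤ n, f k = g k}
        = ENNReal.ofReal (∏ k ∈ Finset.range n, π (g k) (g (k + 1))))
    (hforb : ∀ x y : ℤ, y < x → π x y = 0) (i : ℕ) :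
    ((P 0).prod (P 1)) ((Vis (i:ℤ) ×ˢ Set.univ) ∩ Bset i)
      = ((P 0).prod (P 1)) ((Set.univ ×ˢ Vis (i:ℤ)) ∩ Bset i) := by
  classical
  haveI := hPprob 0; haveI := hPprob 1
  set Q := (P 0).prod (P 1) with hQ
  have hGnull : Q ((Good 0 ×ˢ Good 1 : Set (Om × Om))ᶜ) = 0 := by
    have hsub : (Good 0 ×ˢ Good 1 : Set (Om × Om))ᶜ
        ⊆ ((Good 0)ᶜ ×ˢ (Set.univ : Set Om)) ∪ ((Set.univ : Set Om) ×ˢ (Good 1)ᶜ) := by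
      rintro ⟨f, g⟩ hfg
      simp only [Set.mem_compl_iff, Set.mem_prod, not_and] at hfg
      by_cases hf : f ∈ Good 0
      · exact Or.inr ⟨trivial, hfg hf⟩
      · exact Or.inl ⟨hf, trivial⟩
    refine measure_mono_null hsub (measure_union_null ?_ ?_)
    · rw [hQ, Measure.prod_prod, good_compl_null π P hPprob hstart hcyl hforb 0, zero_mul]
    · rw [hQ, Measure.prod_prod, good_compl_null π P hPprob hstart hcyl hforb 1, mul_zero]
  have hdecomp : ∀ X : Set (Om × Om),
      (X ∩ Bset i) ∩ (Good 0 ×ˢ Good 1)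
        = ⋃ σ : {s : Idx // Adm i s},
            ((X ∩ (Cyl (iM σ.1) (iU σ.1) ×ˢ Cyl (iN σ.1) (iV σ.1)))
              ∩ (Good 0 ×ˢ Good 1)) := by
    intro X
    ext ⟨f, g⟩
    constructor
    · rintro ⟨⟨hX, hB⟩, hf, hg⟩
      obtain ⟨s, hs, hfs, hgs⟩ := cover hf hg hB
      exact Set.mem_iUnion.mpr ⟨⟨s, hs⟩, ⟨hX, hfs, hgs⟩, hf, hg⟩
    · intro h
      obtain ⟨σ, ⟨hX, hfs, hgs⟩, hf, hg⟩ := Set.mem_iUnion.mp h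
      exact ⟨⟨hX, rect_subset_Bset σ.2 hfs hgs⟩, hf, hg⟩
  have hmeasRect : ∀ σ : {s : Idx // Adm i s},
      MeasurableSet ((Cyl (iM σ.1) (iU σ.1) ×ˢ Cyl (iN σ.1) (iV σ.1) : Set (Om × Om))) :=
    fun σ => (measurableSet_cyl _ _).prod (measurableSet_cyl _ _)
  have hcount : ∀ (X : Set (Om × Om)), MeasurableSet X →
      Q (X ∩ Bset i) = ∑' σ : {s : Idx // Adm i s},
        Q (X ∩ (Cyl (iM σ.1) (iU σ.1) ×ˢ Cyl (iN σ.1) (iV σ.1))) := by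
    intro X hX
    calc Q (X ∩ Bset i) = Q ((X ∩ Bset i) ∩ (Good 0 ×ˢ Good 1)) :=
          (measure_inter_conull hGnull).symm
      _ = Q (⋃ σ : {s : Idx // Adm i s},
            ((X ∩ (Cyl (iM σ.1) (iU σ.1) ×ˢ Cyl (iN σ.1) (iV σ.1)))
              ∩ (Good 0 ×ˢ Good 1))) := by rw [hdecomp X]
      _ = ∑' σ : {s : Idx // Adm i s},
            Q ((X ∩ (Cyl (iM σ.1) (iU σ.1) ×ˢ Cyl (iN σ.1) (iV σ.1)))
              ∩ (Good 0 ×ˢ Good 1)) := by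
          refine measure_iUnion ?_ fun σ => ?_
          · intro σ τ hne
            refine Set.disjoint_left.mpr ?_
            rintro ⟨f, g⟩ ⟨⟨-, hfs, hgs⟩, hf, hg⟩ ⟨⟨-, hft, hgt⟩, hf', hg'⟩
            exact hne (Subtype.ext (disjointness σ.2 τ.2 hf hg hfs hgs hft hgt))
          · exact ((hX.inter (hmeasRect σ)).inter
              ((measurableSet_good 0).prod (measurableSet_good 1)))
      _ = ∑' σ : {s : Idx // Adm i s},
            Q (X ∩ (Cyl (iM σ.1) (iU σ.1) ×ˢ Cyl (iN σ.1) (iV σ.1))) :=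
          tsum_congr fun σ => measure_inter_conull hGnull
  have hmeasX0 : MeasurableSet ((Vis (i:ℤ) ×ˢ Set.univ : Set (Om × Om))) :=
    (measurableSet_vis _).prod MeasurableSet.univ
  have hmeasX1 : MeasurableSet ((Set.univ ×ˢ Vis (i:ℤ) : Set (Om × Om))) :=
    MeasurableSet.univ.prod (measurableSet_vis _)
  rw [hcount _ hmeasX0, hcount _ hmeasX1]
  refine tsum_congr fun σ => ?_
  obtain ⟨s, hs⟩ := σ
  obtain ⟨a1, a2, a3, a4, a5, a6, a7, a8, a9⟩ := hs
  have hterm0 : (Vis (i:ℤ) ×ˢ Set.univ) ∩ (Cyl (iM s) (iU s) ×ˢ Cyl (iN s) (iV s))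
      = (Vis (i:ℤ) ∩ Cyl (iM s) (iU s)) ×ˢ Cyl (iN s) (iV s) := by
    rw [Set.prod_inter_prod, Set.univ_inter]
  have hterm1 : (Set.univ ×ˢ Vis (i:ℤ)) ∩ (Cyl (iM s) (iU s) ×ˢ Cyl (iN s) (iV s))
      = Cyl (iM s) (iU s) ×ˢ (Vis (i:ℤ) ∩ Cyl (iN s) (iV s)) := by
    rw [Set.prod_inter_prod, Set.univ_inter]
  rw [hterm0, hterm1, hQ, Measure.prod_prod, Measure.prod_prod]
  have hcyl' : ∀ (x : ℤ) (n : ℕ) (g : ℕ → ℤ), g 0 = x →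
      P x (Cyl n g) = ENNReal.ofReal (∏ k ∈ Finset.range n, π (g k) (g (k + 1))) := hcyl
  have hP0 : P 0 (Vis (i:ℤ) ∩ Cyl (iM s) (iU s))
      = ENNReal.ofReal (∏ k ∈ Finset.range (iM s), π (iU s k) (iU s (k + 1)))
          * P (iU s (iM s)) (Vis (i:ℤ)) := by
    rw [vis_inter_cyl a5 a7 a4]
    exact markov π P hnn hPprob hstart hcyl 0 (iM s) (iU s) a1 (measurableSet_vis _)
  have hP1 : P 1 (Vis (i:ℤ) ∩ Cyl (iN s) (iV s))
      = ENNReal.ofReal (∏ k ∈ Finset.range (iN s), π (iV s k) (iV s (k + 1)))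
          * P (iU s (iM s)) (Vis (i:ℤ)) := by
    have h4' : iV s (iN s) ≤ (i : ℤ) := by rw [a3]; exact a4
    rw [vis_inter_cyl a6 a8 h4']
    have hmk := markov π P hnn hPprob hstart hcyl 1 (iN s) (iV s) a2
      (measurableSet_vis (i:ℤ))
    rw [hmk, a3]
  rw [hP0, hP1, hcyl' 0 (iM s) (iU s) a1, hcyl' 1 (iN s) (iV s) a2]
  ring


end Stmt18Aux

open Stmt18Aux in
/-- in the one-dimensional totally asymmetric quenched walk
(kernel `π` on `ℤ`, forbidden direction `-1`, non-nestling drift `≥ δ`,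
`p`-th moment `≤ M^p`), the coefficient
`a_i = (1-π_{ii})⁻¹ (P₀^ω(V_i) - P₁^ω(V_i))` satisfies
`|a_i| ≤ (M/δ)^{p/(p-1)} P_{0,1}^ω(L > i)`, where `L` is the first common
point of two independent walks in the same environment started at `0` and `1`
(so `{L > i}` is the event that there is no common point `≤ i`). -/
theorem stmt_18
    (π : ℤ → ℤ → ℝ) (δ M p : ℝ) (hδ : 0 < δ) (hM : 0 < M) (hp : 1 < p)
    (hnn : ∀ x y, 0 ≤ π x y) (hrow : ∀ x, ∑' y, π x y = 1)
    (hforb : ∀ x y : ℤ, y < x → π x y = 0)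
    (hdriftSummable : ∀ x, Summable (fun y : ℤ => ((y - x : ℤ) : ℝ) * π x y))
    (hdrift : ∀ x : ℤ, δ ≤ ∑' y : ℤ, ((y - x : ℤ) : ℝ) * π x y)
    (hmomSummable : ∀ x, Summable (fun y : ℤ => |((y - x : ℤ) : ℝ)| ^ p * π x y))
    (hmom : ∀ x : ℤ, ∑' y : ℤ, |((y - x : ℤ) : ℝ)| ^ p * π x y ≤ M ^ p)
    (P : ℤ → Measure (ℕ → ℤ)) (hPprob : ∀ x, IsProbabilityMeasure (P x))
    (hstart : ∀ x, P x {f | f 0 = x} = 1)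
    (hcyl : ∀ (x : ℤ) (n : ℕ) (g : ℕ → ℤ), g 0 = x →
      P x {f | ∀ k ≤ n, f k = g k}
        = ENNReal.ofReal (∏ k ∈ Finset.range n, π (g k) (g (k + 1))))
    (i : ℕ) (a : ℝ)
    (ha : a = (1 - π i i)⁻¹ *
      ((P 0 {f | ∃ n, f n = (i : ℤ)}).toReal - (P 1 {f | ∃ n, f n = (i : ℤ)}).toReal)) :
    |a| ≤ (M / δ) ^ (p / (p - 1)) *
      (((P 0).prod (P 1))
        {fg | ¬ ∃ ℓ : ℤ, ℓ ≤ (i : ℤ) ∧ (∃ m, fg.1 m = ℓ) ∧ (∃ n, fg.2 n = ℓ)}).toReal := by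
  classical
  haveI := hPprob 0; haveI := hPprob 1
  set Q := (P 0).prod (P 1) with hQdef
  haveI : IsProbabilityMeasure Q := by rw [hQdef]; infer_instance
  set B := Bset i with hBdef
  have hmeasB : MeasurableSet B := measurableSet_Bset i
  have hsetN : {fg : Om × Om | ¬ ∃ ℓ : ℤ, ℓ ≤ (i : ℤ)
      ∧ (∃ m, fg.1 m = ℓ) ∧ (∃ n, fg.2 n = ℓ)} = Bᶜ := rfl
  have hVisEq : {f : ℕ → ℤ | ∃ n, f n = (i : ℤ)} = Vis (i : ℤ) := rfl
  set S0 : Set (Om × Om) := Vis (i:ℤ) ×ˢ Set.univ with hS0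
  set S1 : Set (Om × Om) := Set.univ ×ˢ Vis (i:ℤ) with hS1
  have h0 : Q S0 = P 0 (Vis (i:ℤ)) := by
    rw [hQdef, hS0, Measure.prod_prod, measure_univ, mul_one]
  have h1 : Q S1 = P 1 (Vis (i:ℤ)) := by
    rw [hQdef, hS1, Measure.prod_prod, measure_univ, one_mul]
  have hkey : Q (S0 ∩ B) = Q (S1 ∩ B) :=
    key_coupling π P hnn hPprob hstart hcyl hforb i
  have hsplit0 : Q (S0 ∩ B) + Q (S0 ∩ Bᶜ) = Q S0 := by
    rw [← Set.diff_eq]; exact measure_inter_add_diff S0 hmeasB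
  have hsplit1 : Q (S1 ∩ B) + Q (S1 ∩ Bᶜ) = Q S1 := by
    rw [← Set.diff_eq]; exact measure_inter_add_diff S1 hmeasB
  have e0 : (P 0 (Vis (i:ℤ))).toReal
      = (Q (S0 ∩ B)).toReal + (Q (S0 ∩ Bᶜ)).toReal := by
    rw [← h0, ← hsplit0, ENNReal.toReal_add (measure_ne_top _ _) (measure_ne_top _ _)]
  have e1 : (P 1 (Vis (i:ℤ))).toReal
      = (Q (S0 ∩ B)).toReal + (Q (S1 ∩ Bᶜ)).toReal := by
    rw [← h1, ← hsplit1, hkey, ENNReal.toReal_add (measure_ne_top _ _) (measure_ne_top _ _)]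
  have hb0 : (Q (S0 ∩ Bᶜ)).toReal ≤ (Q Bᶜ).toReal :=
    ENNReal.toReal_mono (measure_ne_top _ _) (measure_mono Set.inter_subset_right)
  have hb1 : (Q (S1 ∩ Bᶜ)).toReal ≤ (Q Bᶜ).toReal :=
    ENNReal.toReal_mono (measure_ne_top _ _) (measure_mono Set.inter_subset_right)
  have hn0 : 0 ≤ (Q (S0 ∩ Bᶜ)).toReal := ENNReal.toReal_nonneg
  have hn1 : 0 ≤ (Q (S1 ∩ Bᶜ)).toReal := ENNReal.toReal_nonneg
  have habsdiff : |(P 0 (Vis (i:ℤ))).toReal - (P 1 (Vis (i:ℤ))).toReal| ≤ (Q Bᶜ).toReal := by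
    rw [e0, e1]
    have hrw : (Q (S0 ∩ B)).toReal + (Q (S0 ∩ Bᶜ)).toReal
        - ((Q (S0 ∩ B)).toReal + (Q (S1 ∩ Bᶜ)).toReal)
        = (Q (S0 ∩ Bᶜ)).toReal - (Q (S1 ∩ Bᶜ)).toReal := by ring
    rw [hrw]
    exact abs_sub_le_iff.mpr ⟨by linarith, by linarith⟩
  -- Hölder bound
  have hsub := holder_bound π δ M p hδ hM hp hnn hrow hforb hdriftSummable hdrift
    hmomSummable hmom (i : ℤ)
  have hpos : 0 < (δ / M) ^ (p / (p - 1)) :=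
    Real.rpow_pos_of_pos (div_pos hδ hM) _
  have hsubpos : 0 < 1 - π i i := lt_of_lt_of_le hpos hsub
  have hinv : (1 - π i i)⁻¹ ≤ (M / δ) ^ (p / (p - 1)) := by
    have h2 : (M / δ) ^ (p / (p - 1)) = ((δ / M) ^ (p / (p - 1)))⁻¹ := by
      rw [← Real.inv_rpow (le_of_lt (div_pos hδ hM)), inv_div]
    rw [h2]
    exact inv_anti₀ hpos hsub
  rw [ha, abs_mul, abs_of_nonneg (inv_nonneg.mpr hsubpos.le), hsetN, hVisEq]
  calc (1 - π i i)⁻¹ * |(P 0 (Vis (i:ℤ))).toReal - (P 1 (Vis (i:ℤ))).toReal|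
      ≤ (M / δ) ^ (p / (p - 1)) * (Q Bᶜ).toReal :=
        mul_le_mul hinv habsdiff (abs_nonneg _)
          (Real.rpow_nonneg (div_nonneg hM.le hδ.le) _)
    _ = (M / δ) ^ (p / (p - 1)) * (Q Bᶜ).toReal := rfl
end
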